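/- Let S_ℓ^n denote a sum of ℓ+1 independent exponential random variables each of mean 1/n. For 0 < a < b, there exists γ > 0 (depending on a, b) such that Σ_{ℓ=0}^{n-2} P(S_ℓ^n ≤ a²) P(S_{ℓ+1}^n ≥ b²) ≤ n e^{-γn} for all sufficiently large n. -/

import Mathlib

open MeasureTheory Finset

/-- `P(S_ℓ^n ≤ t)` where `S_ℓ^n` is a sum of `ℓ+1` independent exponential random
variables of mean `1/n`, i.e. a Gamma(ℓ+1, rate n) variable, written via its density. -/
noncomputable def gammaCdfLe (n ℓ : ℕ) (t : ℝ) : ℝ :=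
  ∫ x in Set.Ioc (0 : ℝ) t,
    ((n : ℝ) ^ (ℓ + 1) / Nat.factorial ℓ) * x ^ ℓ * Real.exp (-(n : ℝ) * x)

/-- `P(S_ℓ^n ≥ t)`. -/
noncomputable def gammaCdfGe (n ℓ : ℕ) (t : ℝ) : ℝ :=
  ∫ x in Set.Ici t,
    ((n : ℝ) ^ (ℓ + 1) / Nat.factorial ℓ) * x ^ ℓ * Real.exp (-(n : ℝ) * x)

lemma integrableOn_pow_mul_exp {r : ℝ} (hr : 0 < r) (ℓ : ℕ) :
    IntegrableOn (fun x : ℝ => x ^ ℓ * Real.exp (-r * x)) (Set.Ioi 0) := by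
  have h := integrableOn_rpow_mul_exp_neg_mul_rpow (p := 1) (s := (ℓ : ℝ)) (b := r)
    (lt_of_lt_of_le neg_one_lt_zero (Nat.cast_nonneg ℓ)) one_pos hr
  refine h.congr_fun ?_ measurableSet_Ioi
  intro x hx
  simp [Real.rpow_natCast, Real.rpow_one]

lemma integral_pow_mul_exp {r : ℝ} (hr : 0 < r) (ℓ : ℕ) :
    ∫ x in Set.Ioi (0:ℝ), x ^ ℓ * Real.exp (-r * x)
      = (Nat.factorial ℓ : ℝ) / r ^ (ℓ + 1) := by
  have h := Real.integral_rpow_mul_exp_neg_mul_Ioi (a := (ℓ : ℝ) + 1) (by positivity) hr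
  rw [show ((ℓ : ℝ) + 1) - 1 = (ℓ : ℝ) by ring] at h
  have h2 : ∫ x in Set.Ioi (0:ℝ), x ^ ℓ * Real.exp (-r * x)
      = ∫ t in Set.Ioi (0:ℝ), t ^ (ℓ : ℝ) * Real.exp (-(r * t)) := by
    refine setIntegral_congr_fun measurableSet_Ioi (fun x hx => ?_)
    rw [Real.rpow_natCast, neg_mul]
  have hg : Real.Gamma ((ℓ : ℝ) + 1) = (Nat.factorial ℓ : ℝ) := Real.Gamma_nat_eq_factorial ℓ
  have hp : (1 / r) ^ ((ℓ : ℝ) + 1) = (1 / r) ^ (ℓ + 1 : ℕ) := by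
    rw [show ((ℓ : ℝ) + 1) = ((ℓ + 1 : ℕ) : ℝ) by push_cast; ring, Real.rpow_natCast]
  rw [h2, h, hg, hp, div_pow, one_pow]
  field_simp

lemma gammaCdfLe_le (n ℓ : ℕ) (hn : 0 < n) {t θ : ℝ} (hθ : 0 ≤ θ) :
    gammaCdfLe n ℓ t ≤ Real.exp (θ * t) * ((n : ℝ) / ((n : ℝ) + θ)) ^ (ℓ + 1) := by
  have hnR : (0:ℝ) < n := by exact_mod_cast hn
  have hnθ : (0:ℝ) < (n : ℝ) + θ := by linarith
  set C : ℝ := (n : ℝ) ^ (ℓ + 1) / Nat.factorial ℓ with hCdef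
  have hC : 0 ≤ C := by positivity
  have hgint : IntegrableOn
      (fun x : ℝ => Real.exp (θ * t) * (C * (x ^ ℓ * Real.exp (-((n:ℝ) + θ) * x))))
      (Set.Ioi 0) := by
    exact (((integrableOn_pow_mul_exp hnθ ℓ).const_mul C).const_mul (Real.exp (θ * t)))
  have hfint : IntegrableOn
      (fun x : ℝ => C * x ^ ℓ * Real.exp (-(n : ℝ) * x)) (Set.Ioi 0) := by
    have h := (integrableOn_pow_mul_exp hnR ℓ).const_mul C
    exact IntegrableOn.congr_fun h (fun x _ => by ring) measurableSet_Ioi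
  calc gammaCdfLe n ℓ t
      ≤ ∫ x in Set.Ioc (0:ℝ) t,
          Real.exp (θ * t) * (C * (x ^ ℓ * Real.exp (-((n:ℝ) + θ) * x))) := by
        refine setIntegral_mono_on
          (hfint.mono_set Set.Ioc_subset_Ioi_self)
          (hgint.mono_set Set.Ioc_subset_Ioi_self)
          measurableSet_Ioc (fun x hx => ?_)
        have hx0 : 0 < x := hx.1
        have hxt : x ≤ t := hx.2
        have hexp : Real.exp (-(n:ℝ) * x)
            ≤ Real.exp (θ * t) * Real.exp (-((n:ℝ) + θ) * x) := by
          rw [← Real.exp_add]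
          apply Real.exp_le_exp.2
          nlinarith [mul_le_mul_of_nonneg_left hxt hθ]
        calc C * x ^ ℓ * Real.exp (-(n:ℝ) * x)
            ≤ C * x ^ ℓ * (Real.exp (θ * t) * Real.exp (-((n:ℝ) + θ) * x)) :=
              mul_le_mul_of_nonneg_left hexp (mul_nonneg hC (pow_nonneg hx0.le _))
          _ = Real.exp (θ * t) * (C * (x ^ ℓ * Real.exp (-((n:ℝ) + θ) * x))) := by ring
    _ ≤ ∫ x in Set.Ioi (0:ℝ),
          Real.exp (θ * t) * (C * (x ^ ℓ * Real.exp (-((n:ℝ) + θ) * x))) := by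
        refine setIntegral_mono_set hgint ?_
          (HasSubset.Subset.eventuallyLE Set.Ioc_subset_Ioi_self)
        filter_upwards [ae_restrict_mem measurableSet_Ioi] with x hx
        exact mul_nonneg (Real.exp_pos _).le (mul_nonneg hC
          (mul_nonneg (pow_nonneg (le_of_lt hx) _) (Real.exp_pos _).le))
    _ = Real.exp (θ * t) * ((n : ℝ) / ((n : ℝ) + θ)) ^ (ℓ + 1) := by
        rw [integral_const_mul, integral_const_mul, integral_pow_mul_exp hnθ ℓ]
        rw [div_pow, hCdef]
        have h1 : (Nat.factorial ℓ : ℝ) ≠ 0 := by positivity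
        have h2 : ((n : ℝ) + θ) ^ (ℓ + 1) ≠ 0 := by positivity
        field_simp

lemma gammaCdfGe_le (n ℓ : ℕ) {t θ : ℝ} (ht : 0 < t) (hθ : 0 ≤ θ) (hθn : θ < n) :
    gammaCdfGe n ℓ t ≤ Real.exp (-(θ * t)) * ((n : ℝ) / ((n : ℝ) - θ)) ^ (ℓ + 1) := by
  have hnR : (0:ℝ) < n := lt_of_le_of_lt hθ hθn
  have hnθ : (0:ℝ) < (n : ℝ) - θ := by linarith
  set C : ℝ := (n : ℝ) ^ (ℓ + 1) / Nat.factorial ℓ with hCdef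
  have hC : 0 ≤ C := by positivity
  have hsub : Set.Ici t ⊆ Set.Ioi (0:ℝ) := fun x hx => lt_of_lt_of_le ht hx
  have hgint : IntegrableOn
      (fun x : ℝ => Real.exp (-(θ * t)) * (C * (x ^ ℓ * Real.exp (-((n:ℝ) - θ) * x))))
      (Set.Ioi 0) :=
    ((integrableOn_pow_mul_exp hnθ ℓ).const_mul C).const_mul (Real.exp (-(θ * t)))
  have hfint : IntegrableOn
      (fun x : ℝ => C * x ^ ℓ * Real.exp (-(n : ℝ) * x)) (Set.Ioi 0) := by
    have h := (integrableOn_pow_mul_exp hnR ℓ).const_mul C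
    exact IntegrableOn.congr_fun h (fun x _ => by ring) measurableSet_Ioi
  calc gammaCdfGe n ℓ t
      ≤ ∫ x in Set.Ici t,
          Real.exp (-(θ * t)) * (C * (x ^ ℓ * Real.exp (-((n:ℝ) - θ) * x))) := by
        refine setIntegral_mono_on (hfint.mono_set hsub) (hgint.mono_set hsub)
          measurableSet_Ici (fun x hx => ?_)
        have hx0 : 0 < x := lt_of_lt_of_le ht hx
        have htx : t ≤ x := hx
        have hexp : Real.exp (-(n:ℝ) * x)
            ≤ Real.exp (-(θ * t)) * Real.exp (-((n:ℝ) - θ) * x) := by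
          rw [← Real.exp_add]
          apply Real.exp_le_exp.2
          nlinarith [mul_le_mul_of_nonneg_left htx hθ]
        calc C * x ^ ℓ * Real.exp (-(n:ℝ) * x)
            ≤ C * x ^ ℓ * (Real.exp (-(θ * t)) * Real.exp (-((n:ℝ) - θ) * x)) :=
              mul_le_mul_of_nonneg_left hexp (mul_nonneg hC (pow_nonneg hx0.le _))
          _ = Real.exp (-(θ * t)) * (C * (x ^ ℓ * Real.exp (-((n:ℝ) - θ) * x))) := by
              ring
    _ ≤ ∫ x in Set.Ioi (0:ℝ),
          Real.exp (-(θ * t)) * (C * (x ^ ℓ * Real.exp (-((n:ℝ) - θ) * x))) := by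
        refine setIntegral_mono_set hgint ?_ (HasSubset.Subset.eventuallyLE hsub)
        filter_upwards [ae_restrict_mem measurableSet_Ioi] with x hx
        exact mul_nonneg (Real.exp_pos _).le (mul_nonneg hC
          (mul_nonneg (pow_nonneg (le_of_lt hx) _) (Real.exp_pos _).le))
    _ = Real.exp (-(θ * t)) * ((n : ℝ) / ((n : ℝ) - θ)) ^ (ℓ + 1) := by
        rw [integral_const_mul, integral_const_mul, integral_pow_mul_exp hnθ ℓ]
        rw [div_pow, hCdef]
        have h1 : (Nat.factorial ℓ : ℝ) ≠ 0 := by positivity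
        have h2 : ((n : ℝ) - θ) ^ (ℓ + 1) ≠ 0 := by positivity
        field_simp

lemma gammaCdfGe_nonneg (n ℓ : ℕ) {t : ℝ} (ht : 0 < t) : 0 ≤ gammaCdfGe n ℓ t := by
  refine setIntegral_nonneg measurableSet_Ici (fun x hx => ?_)
  have hx0 : 0 ≤ x := le_trans ht.le hx
  positivity

set_option maxHeartbeats 1000000 in
theorem exponential_sum_gap_bound (a b : ℝ) (ha : 0 < a) (hab : a < b) :
    ∃ γ : ℝ, 0 < γ ∧ ∃ N : ℕ, ∀ n : ℕ, N ≤ n →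
      ∑ ℓ ∈ Finset.range (n - 1), gammaCdfLe n ℓ (a ^ 2) * gammaCdfGe n (ℓ + 1) (b ^ 2)
        ≤ (n : ℝ) * Real.exp (-γ * n) := by
  obtain ⟨d, hd, hddef⟩ : ∃ d : ℝ, 0 < d ∧ d = b ^ 2 - a ^ 2 :=
    ⟨b ^ 2 - a ^ 2, by nlinarith, rfl⟩
  obtain ⟨c, hc0, hc2, hcd⟩ : ∃ c : ℝ, 0 < c ∧ c ≤ 1/2 ∧ c ≤ d/8 :=
    ⟨min (1/2) (d/8), lt_min (by norm_num) (by positivity), min_le_left _ _,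
      min_le_right _ _⟩
  obtain ⟨γ, hγ, hγdef⟩ : ∃ γ : ℝ, 0 < γ ∧ γ = 3/8 * c * d :=
    ⟨3/8 * c * d, mul_pos (mul_pos (by norm_num) hc0) hd, rfl⟩
  refine ⟨γ, hγ, ⌈1/γ⌉₊ + 2, fun n hn => ?_⟩
  have hn2 : 2 ≤ n := le_trans (Nat.le_add_left 2 _) hn
  have hn0 : 0 < n := by omega
  have hnR : (0:ℝ) < n := by exact_mod_cast hn0
  have hγn : 1 ≤ γ * n := by
    have h1 : (1/γ : ℝ) ≤ (⌈1/γ⌉₊ : ℝ) := Nat.le_ceil _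
    have h2 : ((⌈1/γ⌉₊ : ℕ) : ℝ) ≤ (n : ℝ) := by exact_mod_cast le_trans (Nat.le_add_right _ 2) hn
    have : 1/γ ≤ (n : ℝ) := le_trans h1 h2
    rw [div_le_iff₀ hγ] at this
    nlinarith
  have key : ∀ ℓ ∈ Finset.range (n - 1),
      gammaCdfLe n ℓ (a ^ 2) * gammaCdfGe n (ℓ + 1) (b ^ 2) ≤ Real.exp (-γ * n) := by
    intro ℓ hℓ
    rw [Finset.mem_range] at hℓ
    have hℓn : (ℓ : ℝ) + 1 ≤ (n : ℝ) := by
      have : ℓ + 1 ≤ n := by omega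
      exact_mod_cast this
    obtain ⟨θ, hθdef⟩ : ∃ θ : ℝ, θ = c * n := ⟨c * n, rfl⟩
    have hθ0 : 0 ≤ θ := hθdef ▸ mul_nonneg hc0.le hnR.le
    have hθn : θ < n := by
      rw [hθdef]
      nlinarith
    have h1 := gammaCdfLe_le n ℓ hn0 (t := a ^ 2) hθ0
    have h2 := gammaCdfGe_le n (ℓ + 1) (t := b ^ 2) (pow_pos (lt_trans ha hab) 2) hθ0 hθn
    have e1 : (n : ℝ) / ((n : ℝ) + θ) = 1 / (1 + c) := by
      rw [hθdef]
      have h1c : (0:ℝ) < 1 + c := by linarith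
      field_simp
    have e2 : (n : ℝ) / ((n : ℝ) - θ) = 1 / (1 - c) := by
      rw [hθdef]
      have h1c : (0:ℝ) < 1 - c := by linarith
      have hden : (0:ℝ) < (n : ℝ) - c * n := by nlinarith
      rw [div_eq_div_iff hden.ne' h1c.ne']
      ring
    rw [e1] at h1
    rw [e2] at h2
    have h1c : (0:ℝ) < 1 + c := by linarith
    have h1c' : (0:ℝ) < 1 - c := by linarith
    have h1c2 : (0:ℝ) < 1 - c ^ 2 := by nlinarith
    have hge0 : 0 ≤ gammaCdfGe n (ℓ + 1) (b ^ 2) := gammaCdfGe_nonneg _ _ (pow_pos (lt_trans ha hab) 2)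
    calc gammaCdfLe n ℓ (a ^ 2) * gammaCdfGe n (ℓ + 1) (b ^ 2)
        ≤ (Real.exp (θ * a ^ 2) * (1 / (1 + c)) ^ (ℓ + 1)) *
            (Real.exp (-(θ * b ^ 2)) * (1 / (1 - c)) ^ (ℓ + 1 + 1)) := by
          apply mul_le_mul h1 h2 hge0 (by positivity)
      _ = Real.exp (-(θ * d)) *
            ((1 / (1 - c ^ 2)) ^ (ℓ + 1) * (1 / (1 - c))) := by
          have hE : Real.exp (θ * a ^ 2) * Real.exp (-(θ * b ^ 2))
              = Real.exp (-(θ * d)) := by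
            rw [← Real.exp_add]
            congr 1
            rw [hddef]; ring
          have hbse : 1 / (1 + c) * (1 / (1 - c)) = 1 / (1 - c ^ 2) := by
            rw [div_mul_div_comm, one_mul]
            congr 1
            ring
          have hP : (1 / (1 + c)) ^ (ℓ + 1) * (1 / (1 - c)) ^ (ℓ + 1 + 1)
              = (1 / (1 - c ^ 2)) ^ (ℓ + 1) * (1 / (1 - c)) := by
            rw [pow_succ (1 / (1 - c)) (ℓ + 1),
              show (1 / (1 + c)) ^ (ℓ + 1) * ((1 / (1 - c)) ^ (ℓ + 1) * (1 / (1 - c)))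
                = (1 / (1 + c) * (1 / (1 - c))) ^ (ℓ + 1) * (1 / (1 - c)) by
                rw [mul_pow]; ring, hbse]
          calc (Real.exp (θ * a ^ 2) * (1 / (1 + c)) ^ (ℓ + 1)) *
                (Real.exp (-(θ * b ^ 2)) * (1 / (1 - c)) ^ (ℓ + 1 + 1))
              = (Real.exp (θ * a ^ 2) * Real.exp (-(θ * b ^ 2))) *
                ((1 / (1 + c)) ^ (ℓ + 1) * (1 / (1 - c)) ^ (ℓ + 1 + 1)) := by ring
            _ = Real.exp (-(θ * d)) *
                ((1 / (1 - c ^ 2)) ^ (ℓ + 1) * (1 / (1 - c))) := by rw [hE, hP]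
      _ ≤ Real.exp (-(θ * d)) * (Real.exp (2 * c ^ 2) ^ (ℓ + 1) * 2) := by
          have hA : 1 / (1 - c ^ 2) ≤ Real.exp (2 * c ^ 2) := by
            have h3 : 1 / (1 - c ^ 2) ≤ 1 + 2 * c ^ 2 := by
              rw [div_le_iff₀ h1c2]
              have hcc : c ^ 2 ≤ 1/4 := by nlinarith
              nlinarith [mul_le_mul_of_nonneg_left hcc (sq_nonneg c), sq_nonneg c]
            exact le_trans h3 (by
              have := Real.add_one_le_exp (2 * c ^ 2)
              linarith)
          have hB : 1 / (1 - c) ≤ 2 := by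
            rw [div_le_iff₀ h1c']
            linarith
          apply mul_le_mul_of_nonneg_left _ (Real.exp_pos _).le
          exact mul_le_mul (pow_le_pow_left₀ (by positivity) hA _) hB (by positivity)
            (by positivity)
      _ = 2 * Real.exp (-(θ * d) + ((ℓ + 1 : ℕ) : ℝ) * (2 * c ^ 2)) := by
          rw [Real.exp_add, Real.exp_nat_mul]
          ring
      _ ≤ 2 * Real.exp (-(2 * γ) * n) := by
          apply mul_le_mul_of_nonneg_left _ (by norm_num)
          apply Real.exp_le_exp.2
          have hc8 : 2 * c ^ 2 ≤ c * d / 4 := by nlinarith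
          have hℓ1 : (0:ℝ) ≤ (ℓ:ℝ) + 1 := by positivity
          have h5 : 2 * c ^ 2 * ((ℓ:ℝ) + 1) ≤ c * d / 4 * n := by
            calc 2 * c ^ 2 * ((ℓ:ℝ) + 1) ≤ 2 * c ^ 2 * n :=
                  mul_le_mul_of_nonneg_left hℓn (by positivity)
              _ ≤ c * d / 4 * n := mul_le_mul_of_nonneg_right hc8 hnR.le
          push_cast
          rw [hγdef, hθdef]
          nlinarith
      _ ≤ Real.exp (-γ * n) := by
          have h6 : Real.exp (-γ * n) = Real.exp (γ * n) * Real.exp (-(2 * γ) * n) := by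
            rw [← Real.exp_add]
            ring_nf
          rw [h6]
          apply mul_le_mul_of_nonneg_right _ (Real.exp_pos _).le
          have := Real.add_one_le_exp (γ * n)
          linarith
  calc ∑ ℓ ∈ Finset.range (n - 1), gammaCdfLe n ℓ (a ^ 2) * gammaCdfGe n (ℓ + 1) (b ^ 2)
      ≤ ∑ _ℓ ∈ Finset.range (n - 1), Real.exp (-γ * n) := Finset.sum_le_sum key
    _ = ((n - 1 : ℕ) : ℝ) * Real.exp (-γ * n) := by
        rw [Finset.sum_const, Finset.card_range, nsmul_eq_mul]
    _ ≤ (n : ℝ) * Real.exp (-γ * n) := by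
        apply mul_le_mul_of_nonneg_right _ (Real.exp_pos _).le
        exact_mod_cast Nat.sub_le n 1
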